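/- If every acyclic complex of injective right R-modules is semi-injective, then every acyclic complex of flat left R-modules is pure acyclic. -/

import Mathlib

open CategoryTheory CategoryTheory.Limits ZeroObject

noncomputable section

/-! ### The balanced tensor product `M ⊗_R N` of a right `R`-module `M` and a left
`R`-module `N`, defined as a quotient of `M ⊗_ℤ N`. -/

section Bal

variable (R : Type) [Ring R]
variable (M : Type) [AddCommGroup M] [Module Rᵐᵒᵖ M]
variable (N : Type) [AddCommGroup N] [Module R N]

/-- The subgroup of balancing relations in `M ⊗_ℤ N`. -/
def balRel : Submodule ℤ (TensorProduct ℤ M N) :=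
  Submodule.span ℤ { x | ∃ (r : R) (m : M) (n : N),
    x = (MulOpposite.op r • m) ⊗ₜ[ℤ] n - m ⊗ₜ[ℤ] (r • n) }

/-- The balanced tensor product `M ⊗_R N` of a right `R`-module `M` and a left
`R`-module `N`, as an abelian group (ℤ-module). -/
abbrev Bal := TensorProduct ℤ M N ⧸ balRel R M N

variable {M N}
variable {M' M'' : Type} [AddCommGroup M'] [Module Rᵐᵒᵖ M'] [AddCommGroup M''] [Module Rᵐᵒᵖ M'']
variable {N' N'' : Type} [AddCommGroup N'] [Module R N'] [AddCommGroup N''] [Module R N'']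

/-- Functoriality of the balanced tensor product. -/
def Bal.map (f : M →ₗ[Rᵐᵒᵖ] M') (g : N →ₗ[R] N') :
    Bal R M N →ₗ[ℤ] Bal R M' N' :=
  Submodule.mapQ _ _ (TensorProduct.map (f.restrictScalars ℤ) (g.restrictScalars ℤ)) (by
    rw [balRel, Submodule.span_le]
    rintro x ⟨r, m, n, rfl⟩
    refine Submodule.subset_span ?_
    exact ⟨r, f m, g n, by
      erw [map_sub, TensorProduct.map_tmul, TensorProduct.map_tmul]
      simp [map_smul]⟩)

@[simp] lemma Bal.map_mk (f : M →ₗ[Rᵐᵒᵖ] M') (g : N →ₗ[R] N') (m : M) (n : N) :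
    Bal.map R f g (Submodule.Quotient.mk (m ⊗ₜ[ℤ] n)) =
      Submodule.Quotient.mk (f m ⊗ₜ[ℤ] g n) := by
  rfl

lemma Bal.hom_ext {P : Type} [AddCommGroup P] [Module ℤ P]
    {h h' : Bal R M N →ₗ[ℤ] P}
    (H : ∀ (m : M) (n : N), h (Submodule.Quotient.mk (m ⊗ₜ[ℤ] n)) =
      h' (Submodule.Quotient.mk (m ⊗ₜ[ℤ] n))) : h = h' := by
  apply Submodule.linearMap_qext
  exact TensorProduct.ext' H

lemma Bal.map_id :
    Bal.map R (LinearMap.id : M →ₗ[Rᵐᵒᵖ] M) (LinearMap.id : N →ₗ[R] N) = LinearMap.id := by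
  apply Bal.hom_ext; intro m n; rw [Bal.map_mk]; rfl

lemma Bal.map_comp (f : M →ₗ[Rᵐᵒᵖ] M') (f' : M' →ₗ[Rᵐᵒᵖ] M'')
    (g : N →ₗ[R] N') (g' : N' →ₗ[R] N'') :
    Bal.map R (f'.comp f) (g'.comp g) = (Bal.map R f' g').comp (Bal.map R f g) := by
  apply Bal.hom_ext; intro m n
  simp

lemma Bal.map_add_left (f f' : M →ₗ[Rᵐᵒᵖ] M') (g : N →ₗ[R] N') :
    Bal.map R (f + f') g = Bal.map R f g + Bal.map R f' g := by
  apply Bal.hom_ext; intro m n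
  simp [← Submodule.Quotient.mk_add, ← TensorProduct.add_tmul]

lemma Bal.map_add_right (f : M →ₗ[Rᵐᵒᵖ] M') (g g' : N →ₗ[R] N') :
    Bal.map R f (g + g') = Bal.map R f g + Bal.map R f g' := by
  apply Bal.hom_ext; intro m n
  simp [← Submodule.Quotient.mk_add, ← TensorProduct.tmul_add]

end Bal

/-! ### The balanced tensor product as a bifunctor -/

section balFunctor

variable (R : Type) [Ring R]

/-- The balanced tensor product bifunctor `ModuleCat Rᵐᵒᵖ ⥤ ModuleCat R ⥤ ModuleCat ℤ`. -/
def balFunctor : ModuleCat.{0} Rᵐᵒᵖ ⥤ ModuleCat.{0} R ⥤ ModuleCat.{0} ℤ where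
  obj M :=
    { obj := fun N => ModuleCat.of ℤ (Bal R M N)
      map := fun {N N'} g => ModuleCat.ofHom (Bal.map R LinearMap.id g.hom)
      map_id := fun N => by
        ext1
        exact Bal.map_id R
      map_comp := fun {N₁ N₂ N₃} g g' => by
        ext1
        have := Bal.map_comp R (LinearMap.id : M →ₗ[Rᵐᵒᵖ] M) LinearMap.id g.hom g'.hom
        rw [LinearMap.id_comp] at this
        exact this }
  map {M M'} f :=
    { app := fun N => ModuleCat.ofHom (Bal.map R f.hom LinearMap.id)
      naturality := fun {N N'} g => by
        ext1
        show (Bal.map R f.hom LinearMap.id).comp (Bal.map R LinearMap.id g.hom)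
          = (Bal.map R LinearMap.id g.hom).comp (Bal.map R f.hom LinearMap.id)
        rw [← Bal.map_comp, ← Bal.map_comp]
        simp }
  map_id M := by
    ext N : 2
    ext1
    exact Bal.map_id R
  map_comp {M₁ M₂ M₃} f f' := by
    ext N : 2
    ext1
    show Bal.map R (f'.hom.comp f.hom) _
      = (Bal.map R f'.hom LinearMap.id).comp (Bal.map R f.hom LinearMap.id)
    rw [← Bal.map_comp]
    simp

instance balFunctor_additive : (balFunctor R).Additive where
  map_add {M M'} {f f'} := by
    ext N : 2
    ext1
    exact Bal.map_add_left R f.hom f'.hom LinearMap.id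

instance balFunctor_obj_additive (M : ModuleCat.{0} Rᵐᵒᵖ) :
    ((balFunctor R).obj M).Additive where
  map_add {N N'} {g g'} := by
    ext1
    exact Bal.map_add_right R LinearMap.id g.hom g'.hom

end balFunctor

/-! ### Module-theoretic notions over a not necessarily commutative ring.
Right `R`-modules are treated as (left) modules over the opposite ring `Rᵐᵒᵖ`. -/

section ModuleNotions

variable (R : Type) [Ring R]

/-- A left `R`-module `N` is flat if tensoring with it preserves injectivity of maps of
right `R`-modules. -/
def FlatModule (N : Type) [AddCommGroup N] [Module R N] : Prop :=
  ∀ (M M' : Type) [AddCommGroup M] [Module Rᵐᵒᵖ M] [AddCommGroup M'] [Module Rᵐᵒᵖ M']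
    (f : M →ₗ[Rᵐᵒᵖ] M'), Function.Injective f →
      Function.Injective (Bal.map R f (LinearMap.id : N →ₗ[R] N))

/-- Vanishing of `Ext¹_R(X, Y)`, expressed by the splitting of every short exact
sequence `0 → Y → E → X → 0`. -/
def ext1Zero (X Y : Type) [AddCommGroup X] [Module R X] [AddCommGroup Y] [Module R Y] :
    Prop :=
  ∀ (E : Type) [AddCommGroup E] [Module R E] (i : Y →ₗ[R] E) (p : E →ₗ[R] X),
    Function.Injective i → Function.Surjective p → Function.Exact i p →
      ∃ s : X →ₗ[R] E, p.comp s = LinearMap.id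

/-- A left `R`-module `C` is cotorsion if `Ext¹_R(F, C) = 0` for every flat left
`R`-module `F`. -/
def CotorsionModule (C : Type) [AddCommGroup C] [Module R C] : Prop :=
  ∀ (F : Type) [AddCommGroup F] [Module R F], FlatModule R F → ext1Zero R F C

/-- A left `R`-module `E` is fp-injective if `Ext¹_R(F, E) = 0` for every finitely
presented left `R`-module `F`. -/
def FpInjectiveModule (E : Type) [AddCommGroup E] [Module R E] : Prop :=
  ∀ (F : Type) [AddCommGroup F] [Module R F],
    Module.FinitePresentation R F → ext1Zero R F E

/-- A left `R`-module `P` is fp-projective if `Ext¹_R(P, E) = 0` for every fp-injective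
left `R`-module `E`. -/
def FpProjectiveModule (P : Type) [AddCommGroup P] [Module R P] : Prop :=
  ∀ (E : Type) [AddCommGroup E] [Module R E], FpInjectiveModule R E → ext1Zero R P E

/-- `ProjDimLE R n M` says that the left `R`-module `M` has projective dimension at
most `n`, i.e. it admits a projective resolution of length `n`. -/
def ProjDimLE : ℕ → ∀ (M : Type) [AddCommGroup M] [Module R M], Prop
  | 0 => fun M _ _ => Module.Projective R M
  | n + 1 => fun M _ _ =>
      ∃ (P : Type) (_ : AddCommGroup P) (_ : Module R P) (p : P →ₗ[R] M),
        Module.Projective R P ∧ Function.Surjective p ∧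
          ProjDimLE n (LinearMap.ker p)

/-- A left `R`-module has finite projective dimension if it admits a finite projective
resolution. -/
def FiniteProjDim (M : Type) [AddCommGroup M] [Module R M] : Prop :=
  ∃ n : ℕ, ProjDimLE R n M

/-- `FlatDimLE R n M` says that the left `R`-module `M` has flat dimension at most `n`,
i.e. it admits a flat resolution of length `n`. -/
def FlatDimLE : ℕ → ∀ (M : Type) [AddCommGroup M] [Module R M], Prop
  | 0 => fun M _ _ => FlatModule R M
  | n + 1 => fun M _ _ =>
      ∃ (F : Type) (_ : AddCommGroup F) (_ : Module R F) (p : F →ₗ[R] M),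
        FlatModule R F ∧ Function.Surjective p ∧
          FlatDimLE n (LinearMap.ker p)

/-- A left `R`-module has finite flat dimension if it admits a finite flat resolution. -/
def FiniteFlatDim (M : Type) [AddCommGroup M] [Module R M] : Prop :=
  ∃ n : ℕ, FlatDimLE R n M

/-- `R` is right coherent: every finitely generated right ideal of `R` is finitely
presented as a right `R`-module. -/
def RightCoherent : Prop :=
  ∀ I : Submodule Rᵐᵒᵖ R, I.FG → Module.FinitePresentation Rᵐᵒᵖ I

/-- `R` is right regular: every finitely generated right ideal of `R` has finite
projective dimension as a right `R`-module. -/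
def RightRegular : Prop :=
  ∀ I : Submodule Rᵐᵒᵖ R, I.FG → FiniteProjDim Rᵐᵒᵖ I

/-- `R` is left coherent: every finitely generated left ideal of `R` is finitely
presented as a left `R`-module. -/
def LeftCoherent : Prop :=
  ∀ I : Submodule R R, I.FG → Module.FinitePresentation R I

/-- `R` is left regular: every finitely generated left ideal of `R` has finite
projective dimension as a left `R`-module. -/
def LeftRegular : Prop :=
  ∀ I : Submodule R R, I.FG → FiniteProjDim R I

/-- `R` is von Neumann regular if every element `a` has a quasi-inverse `b` with
`a * b * a = a`. -/
def VonNeumannRegular : Prop := ∀ a : R, ∃ b : R, a * b * a = a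

/-- An object `M` of `ModuleCat A` admits a projective resolution by degreewise
finitely generated projective modules. -/
def HasDegreewiseFGProjectiveResolution {A : Type} [Ring A] (M : ModuleCat.{0} A) : Prop :=
  ∃ res : ProjectiveResolution M, ∀ n : ℕ, Module.Finite A (res.complex.X n)

end ModuleNotions

/-! ### Complexes -/

section Complexes

variable (A : Type) [Ring A]

/-- Unbounded (cochain) complexes of modules. -/
abbrev Cx := CochainComplex (ModuleCat.{0} A) ℤ

/-- A complex is acyclic if it is exact in every degree. -/
def IsAcyclic (C : Cx A) : Prop := ∀ n : ℤ, C.ExactAt n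

/-- Acyclicity for complexes of abelian groups. -/
def IsAcyclicAb (C : CochainComplex AddCommGrpCat.{0} ℤ) : Prop := ∀ n : ℤ, C.ExactAt n

/-- Acyclicity for complexes of ℤ-modules. -/
def IsAcyclicZMod (C : CochainComplex (ModuleCat.{0} ℤ) ℤ) : Prop := ∀ n : ℤ, C.ExactAt n

/-- A complex is contractible if it is homotopy equivalent to the zero complex. -/
def IsContractible (C : Cx A) : Prop := Nonempty (HomotopyEquiv C (0 : Cx A))

variable {A}

/-- A complex `P` is semi-projective if it consists of projective modules and the total
Hom complex `Hom(P, C)` is acyclic for every acyclic complex `C`. -/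
def SemiProjective (P : Cx A) : Prop :=
  (∀ n : ℤ, Module.Projective A (P.X n)) ∧
  ∀ C : Cx A, IsAcyclic A C → IsAcyclicAb (CochainComplex.HomComplex P C)

/-- A complex `I` is semi-injective if it consists of injective modules and the total
Hom complex `Hom(C, I)` is acyclic for every acyclic complex `C`. -/
def SemiInjective (I : Cx A) : Prop :=
  (∀ n : ℤ, Module.Injective A (I.X n)) ∧
  ∀ C : Cx A, IsAcyclic A C → IsAcyclicAb (CochainComplex.HomComplex C I)

variable (A)

/-- A complex `E` (of right modules, say) is semi-fp-injective if it consists of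
fp-injective modules and the total Hom complex `Hom(X, E)` is acyclic for every acyclic
complex `X` whose cycle modules are all fp-projective. -/
def SemiFpInjective (E : Cx A) : Prop :=
  (∀ n : ℤ, FpInjectiveModule A (E.X n)) ∧
  ∀ X : Cx A, IsAcyclic A X → (∀ n : ℤ, FpProjectiveModule A (X.cycles n)) →
    IsAcyclicAb (CochainComplex.HomComplex X E)

variable {A}

end Complexes

section TensorComplexes

variable (R : Type) [Ring R]

/-- The total tensor complex `K ⊗_R L` of a complex `K` of right `R`-modules and a
complex `L` of left `R`-modules. -/
def tensorComplex (K : Cx Rᵐᵒᵖ) (L : Cx R) : CochainComplex (ModuleCat.{0} ℤ) ℤ :=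
  HomologicalComplex.mapBifunctor K L (balFunctor R) (ComplexShape.up ℤ)

/-- A complex `F` of left `R`-modules is semi-flat if it consists of flat modules and
the tensor complex `K ⊗_R F` is acyclic for every acyclic complex `K` of right
`R`-modules. -/
def SemiFlat (F : Cx R) : Prop :=
  (∀ n : ℤ, FlatModule R (F.X n)) ∧
  ∀ K : Cx Rᵐᵒᵖ, IsAcyclic Rᵐᵒᵖ K → IsAcyclicZMod (tensorComplex R K F)

/-- An acyclic complex `X` of left `R`-modules is pure acyclic if each short exact
sequence `0 → Z^n(X) → X^n → Z^{n+1}(X) → 0` of cycle modules is pure exact, i.e.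
stays a short exact sequence after tensoring with every right `R`-module `M`. -/
def PureAcyclic (X : Cx R) : Prop :=
  IsAcyclic R X ∧
  ∀ (n : ℤ) (M : ModuleCat.{0} Rᵐᵒᵖ),
    Function.Injective (((balFunctor R).obj M).map (X.iCycles n)) ∧
    Function.Exact (((balFunctor R).obj M).map (X.iCycles n))
      (((balFunctor R).obj M).map (X.toCycles n (n + 1))) ∧
    Function.Surjective (((balFunctor R).obj M).map (X.toCycles n (n + 1)))

/-- `S ⊗_R -` is exact and reflects exactness, where `S` is a right `R`-module. -/
def FaithfullyFlatRight (S : Type) [AddCommGroup S] [Module Rᵐᵒᵖ S] : Prop :=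
  ∀ (N₁ N₂ N₃ : Type) [AddCommGroup N₁] [Module R N₁] [AddCommGroup N₂] [Module R N₂]
    [AddCommGroup N₃] [Module R N₃] (g₁ : N₁ →ₗ[R] N₂) (g₂ : N₂ →ₗ[R] N₃),
    Function.Exact g₁ g₂ ↔
      Function.Exact (Bal.map R (LinearMap.id : S →ₗ[Rᵐᵒᵖ] S) g₁)
        (Bal.map R (LinearMap.id : S →ₗ[Rᵐᵒᵖ] S) g₂)

end TensorComplexes




/-! ### Auxiliary development -/

section CharDual

open CharacterModule

variable {R : Type} [Ring R]

/-- Right `R`-module structure on the character module of a left `R`-module. -/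
instance charModuleMop (N : Type) [AddCommGroup N] [Module R N] :
    Module Rᵐᵒᵖ (CharacterModule N) where
  smul x c := c.comp (DistribMulAction.toAddMonoidHom N x.unop)
  one_smul c := DFunLike.ext _ _ fun n => congrArg c (one_smul R n)
  mul_smul x y c := DFunLike.ext _ _ fun n =>
    congrArg c (mul_smul y.unop x.unop n)
  smul_zero x := rfl
  smul_add x c c' := rfl
  add_smul x y c := DFunLike.ext _ _ fun n => by
    show c ((x.unop + y.unop) • n) = c (x.unop • n) + c (y.unop • n)
    rw [add_smul, map_add]
  zero_smul c := DFunLike.ext _ _ fun n => by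
    show c ((0 : R) • n) = 0
    rw [zero_smul, map_zero]

@[simp] lemma charSmul_apply {N : Type} [AddCommGroup N] [Module R N]
    (x : Rᵐᵒᵖ) (c : CharacterModule N) (n : N) : (x • c) n = c (x.unop • n) := rfl

/-- The `Rᵐᵒᵖ`-linear dual of an `R`-linear map. -/
def cdual {N N' : Type} [AddCommGroup N] [Module R N] [AddCommGroup N'] [Module R N']
    (f : N →ₗ[R] N') : CharacterModule N' →ₗ[Rᵐᵒᵖ] CharacterModule N where
  toFun c := c.comp f.toAddMonoidHom
  map_add' _ _ := rfl
  map_smul' x c := DFunLike.ext _ _ fun n => (congrArg c (f.map_smul x.unop n)).symm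

@[simp] lemma cdual_apply {N N' : Type} [AddCommGroup N] [Module R N] [AddCommGroup N']
    [Module R N'] (f : N →ₗ[R] N') (c : CharacterModule N') (n : N) :
    cdual f c n = c (f n) := rfl

lemma cdual_zero {N N' : Type} [AddCommGroup N] [Module R N] [AddCommGroup N']
    [Module R N'] : cdual (0 : N →ₗ[R] N') = 0 :=
  LinearMap.ext fun c => DFunLike.ext _ _ fun _ => by
    show c 0 = 0
    exact map_zero c

lemma cdual_comp {N N' N'' : Type} [AddCommGroup N] [Module R N] [AddCommGroup N']
    [Module R N'] [AddCommGroup N''] [Module R N''] (f : N →ₗ[R] N') (g : N' →ₗ[R] N'') :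
    (cdual f).comp (cdual g) = cdual (g.comp f) :=
  LinearMap.ext fun c => DFunLike.ext _ _ fun _ => rfl

end CharDual

section ZDual

variable {A B C : Type} [AddCommGroup A] [AddCommGroup B] [AddCommGroup C]

/-- The dual of an additive map, as a plain function on character modules. -/
def dualZ (f : A →+ B) : CharacterModule B → CharacterModule A :=
  fun c => c.comp f

@[simp] lemma dualZ_apply (f : A →+ B) (c : CharacterModule B) (a : A) :
    dualZ f c a = c (f a) := rfl

lemma dualZ_surjective_of_injective (f : A →+ B) (hf : Function.Injective f) :
    Function.Surjective (dualZ f) := by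
  intro c
  obtain ⟨c', hc'⟩ := CharacterModule.dual_surjective_of_injective f.toIntLinearMap hf c
  exact ⟨c', by ext a; exact DFunLike.congr_fun hc' a⟩

lemma injective_of_dualZ_surjective (f : A →+ B) (hf : Function.Surjective (dualZ f)) :
    Function.Injective f := by
  rw [injective_iff_map_eq_zero]
  intro a ha
  refine CharacterModule.eq_zero_of_character_apply fun c => ?_
  obtain ⟨c', hc'⟩ := hf c
  rw [← hc']
  show c' (f a) = 0
  rw [ha, map_zero]

lemma dualZ_exact_of_exact (f : A →+ B) (g : B →+ C) (h : Function.Exact f g) :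
    Function.Exact (dualZ g) (dualZ f) := by
  intro c
  constructor
  · intro hc
    have hker : LinearMap.ker g.toIntLinearMap ≤ LinearMap.ker c.toIntLinearMap := by
      intro b hb
      obtain ⟨a, rfl⟩ := (h b).mp hb
      exact DFunLike.congr_fun hc a
    set cbar : B ⧸ LinearMap.ker g.toIntLinearMap →ₗ[ℤ] AddCircle (1 : ℚ) :=
      Submodule.liftQ _ c.toIntLinearMap hker with hcbar
    set e := g.toIntLinearMap.quotKerEquivRange with he
    obtain ⟨ψ, hψ⟩ := dualZ_surjective_of_injective
      ((LinearMap.range g.toIntLinearMap).subtype).toAddMonoidHom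
      (Submodule.injective_subtype _)
      (cbar.comp e.symm.toLinearMap).toAddMonoidHom
    refine ⟨ψ, ?_⟩
    ext b
    have hmem : g b ∈ LinearMap.range g.toIntLinearMap := ⟨b, rfl⟩
    have h1 : ψ (g b) = cbar (e.symm ⟨g b, hmem⟩) :=
      DFunLike.congr_fun hψ (⟨g b, hmem⟩ : LinearMap.range g.toIntLinearMap)
    have h2 : e.symm ⟨g b, hmem⟩ = Submodule.Quotient.mk b := by
      rw [LinearEquiv.symm_apply_eq]
      exact Subtype.ext rfl
    show ψ (g b) = c b
    rw [h1, h2]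
    rfl
  · rintro ⟨ψ, rfl⟩
    ext a
    show ψ (g (f a)) = 0
    rw [h.apply_apply_eq_zero a, map_zero]

lemma exact_of_dualZ_exact (f : A →+ B) (g : B →+ C)
    (h : Function.Exact (dualZ g) (dualZ f)) : Function.Exact f g := by
  intro b
  constructor
  · intro hb
    by_contra hmem
    have hmk : (Submodule.Quotient.mk b : B ⧸ LinearMap.range f.toIntLinearMap) ≠ 0 := by
      intro h0
      rw [Submodule.Quotient.mk_eq_zero] at h0
      obtain ⟨a, ha⟩ := h0
      exact hmem ⟨a, ha⟩
    obtain ⟨χ, hχ⟩ := CharacterModule.exists_character_apply_ne_zero_of_ne_zero hmk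
    have h0 : dualZ f (dualZ (LinearMap.range f.toIntLinearMap).mkQ.toAddMonoidHom χ) = 0 := by
      ext a
      show χ (Submodule.Quotient.mk (f a)) = 0
      rw [show (Submodule.Quotient.mk (f a) : B ⧸ LinearMap.range f.toIntLinearMap) = 0 from
        (Submodule.Quotient.mk_eq_zero _).mpr ⟨a, rfl⟩, map_zero]
    obtain ⟨ψ, hψ⟩ := (h _).mp h0
    have hb' : χ (Submodule.Quotient.mk b) = ψ (g b) := (DFunLike.congr_fun hψ b).symm
    rw [hb, map_zero] at hb'
    exact hχ hb'
  · rintro ⟨a, rfl⟩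
    refine CharacterModule.eq_zero_of_character_apply fun χ => ?_
    have h1 : dualZ f (dualZ g χ) = 0 := (h (dualZ g χ)).mpr ⟨χ, rfl⟩
    exact DFunLike.congr_fun h1 a

lemma dualZ_injective_of_surjective (g : B →+ C) (hg : Function.Surjective g) :
    Function.Injective (dualZ g) := by
  intro c c' hcc'
  ext x
  obtain ⟨b, rfl⟩ := hg x
  exact DFunLike.congr_fun hcc' b

end ZDual



section BalAdj

variable (R : Type) [Ring R]
variable {M N N' : Type} [AddCommGroup M] [Module Rᵐᵒᵖ M]
  [AddCommGroup N] [Module R N] [AddCommGroup N'] [Module R N']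

lemma bal_mk_rel (r : R) (m : M) (n : N) :
    (Submodule.Quotient.mk ((MulOpposite.op r • m) ⊗ₜ[ℤ] n) : Bal R M N) =
      Submodule.Quotient.mk (m ⊗ₜ[ℤ] (r • n)) := by
  rw [Submodule.Quotient.eq]
  exact Submodule.subset_span ⟨r, m, n, rfl⟩

/-- Currying: a character of `Bal R M N` gives an `Rᵐᵒᵖ`-linear map `M → N⋆`. -/
def balPhi (c : CharacterModule (Bal R M N)) : M →ₗ[Rᵐᵒᵖ] CharacterModule N where
  toFun m :=
    { toFun := fun n => c (Submodule.Quotient.mk (m ⊗ₜ[ℤ] n))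
      map_zero' := by
        show c (Submodule.Quotient.mk (m ⊗ₜ[ℤ] (0 : N))) = 0
        rw [TensorProduct.tmul_zero, Submodule.Quotient.mk_zero, map_zero]
      map_add' := fun n n' => by
        show c (Submodule.Quotient.mk (m ⊗ₜ[ℤ] (n + n'))) = _ + _
        rw [TensorProduct.tmul_add, Submodule.Quotient.mk_add, map_add] }
  map_add' m m' := DFunLike.ext _ _ fun n => by
    show c _ = c _ + c _
    rw [TensorProduct.add_tmul, Submodule.Quotient.mk_add, map_add]
  map_smul' x m := DFunLike.ext _ _ fun n => by
    show c (Submodule.Quotient.mk ((x • m) ⊗ₜ[ℤ] n)) = c (Submodule.Quotient.mk (m ⊗ₜ[ℤ] (x.unop • n)))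
    rw [show x • m = MulOpposite.op x.unop • m from rfl, bal_mk_rel]

@[simp] lemma balPhi_apply (c : CharacterModule (Bal R M N)) (m : M) (n : N) :
    balPhi R c m n = c (Submodule.Quotient.mk (m ⊗ₜ[ℤ] n)) := rfl

/-- Uncurrying: an `Rᵐᵒᵖ`-linear map `M → N⋆` gives a character of `Bal R M N`. -/
def balPsi (φ : M →ₗ[Rᵐᵒᵖ] CharacterModule N) : CharacterModule (Bal R M N) :=
  letI b : M →ₗ[ℤ] N →ₗ[ℤ] AddCircle (1 : ℚ) :=
    { toFun := fun m => (φ m).toIntLinearMap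
      map_add' := fun m m' => by ext n; show φ (m + m') n = φ m n + φ m' n; rw [map_add]; rfl
      map_smul' := fun z m => by
        ext n
        show φ (z • m) n = (z • (φ m).toIntLinearMap) n
        rw [map_zsmul φ z m]
        rfl }
  (Submodule.liftQ (balRel R M N) (TensorProduct.lift b) (by
    rw [balRel, Submodule.span_le]
    rintro x ⟨r, m, n, rfl⟩
    simp only [SetLike.mem_coe, LinearMap.mem_ker, map_sub]
    have h1 : TensorProduct.lift b ((MulOpposite.op r • m) ⊗ₜ[ℤ] n) = φ (MulOpposite.op r • m) n :=
      rfl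
    have h2 : TensorProduct.lift b (m ⊗ₜ[ℤ] (r • n)) = φ m (r • n) := rfl
    show TensorProduct.lift b ((MulOpposite.op r • m) ⊗ₜ[ℤ] n - m ⊗ₜ[ℤ] (r • n)) = 0
    rw [map_sub, h1, h2, map_smul φ, charSmul_apply]
    exact sub_self _)).toAddMonoidHom

@[simp] lemma balPsi_apply (φ : M →ₗ[Rᵐᵒᵖ] CharacterModule N) (m : M) (n : N) :
    balPsi R φ (Submodule.Quotient.mk (m ⊗ₜ[ℤ] n)) = φ m n := rfl

lemma bal_character_ext {c c' : CharacterModule (Bal R M N)}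
    (H : ∀ m n, c (Submodule.Quotient.mk (m ⊗ₜ[ℤ] n)) =
      c' (Submodule.Quotient.mk (m ⊗ₜ[ℤ] n))) : c = c' := by
  ext x
  obtain ⟨y, rfl⟩ := Submodule.Quotient.mk_surjective _ x
  induction y using TensorProduct.induction_on with
  | zero => rw [Submodule.Quotient.mk_zero, map_zero, map_zero]
  | tmul m n => exact H m n
  | add a b ha hb => rw [Submodule.Quotient.mk_add, map_add, map_add, ha, hb]

lemma balPhi_psi (φ : M →ₗ[Rᵐᵒᵖ] CharacterModule N) : balPhi R (balPsi R φ) = φ :=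
  LinearMap.ext fun m => DFunLike.ext _ _ fun n => by rw [balPhi_apply, balPsi_apply]

lemma balPhi_injective : Function.Injective (balPhi R (M := M) (N := N)) := by
  intro c c' hcc'
  refine bal_character_ext R fun m n => ?_
  have := DFunLike.congr_fun (DFunLike.congr_fun hcc' m) n
  simpa using this

lemma balPhi_surjective : Function.Surjective (balPhi R (M := M) (N := N)) :=
  fun φ => ⟨balPsi R φ, balPhi_psi R φ⟩

lemma balPhi_zero : balPhi R (0 : CharacterModule (Bal R M N)) = 0 :=
  LinearMap.ext fun m => DFunLike.ext _ _ fun n => rfl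

/-- Naturality of `balPhi` in the second variable. -/
lemma balPhi_natural (g : N →ₗ[R] N') (c : CharacterModule (Bal R M N')) :
    balPhi R (dualZ (Bal.map R (LinearMap.id : M →ₗ[Rᵐᵒᵖ] M) g).toAddMonoidHom c) =
      (cdual g).comp (balPhi R c) :=
  LinearMap.ext fun m => DFunLike.ext _ _ fun n => by
    show c (Bal.map R LinearMap.id g (Submodule.Quotient.mk (m ⊗ₜ[ℤ] n))) =
      c (Submodule.Quotient.mk (m ⊗ₜ[ℤ] g n))
    rw [Bal.map_mk]
    rfl

lemma bal_map_id_surjective (g : N →ₗ[R] N') (hg : Function.Surjective g) :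
    Function.Surjective (Bal.map R (LinearMap.id : M →ₗ[Rᵐᵒᵖ] M) g) := by
  intro x
  obtain ⟨y, rfl⟩ := Submodule.Quotient.mk_surjective _ x
  obtain ⟨z, hz⟩ := TensorProduct.map_surjective
    (show Function.Surjective ((LinearMap.id : M →ₗ[Rᵐᵒᵖ] M).restrictScalars ℤ)
      from fun a => ⟨a, rfl⟩)
    (show Function.Surjective (g.restrictScalars ℤ) from hg) y
  refine ⟨Submodule.Quotient.mk z, ?_⟩
  rw [← hz]
  rfl

/-- Flat modules have injective character modules. -/
lemma flat_char_injective (N : Type) [AddCommGroup N] [Module R N] (hN : FlatModule R N) :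
    Module.Injective Rᵐᵒᵖ (CharacterModule N) := by
  constructor
  intro X Y _ _ _ _ f hf g
  have hinj : Function.Injective (Bal.map R f (LinearMap.id : N →ₗ[R] N)) := hN X Y f hf
  obtain ⟨c, hc⟩ := dualZ_surjective_of_injective
    (Bal.map R f (LinearMap.id : N →ₗ[R] N)).toAddMonoidHom hinj (balPsi R g)
  refine ⟨balPhi R c, fun x => ?_⟩
  refine DFunLike.ext _ _ fun n => ?_
  have h1 : (Bal.map R f (LinearMap.id : N →ₗ[R] N)) (Submodule.Quotient.mk (x ⊗ₜ[ℤ] n)) =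
      Submodule.Quotient.mk (f x ⊗ₜ[ℤ] n) := by
    rw [Bal.map_mk]
    rfl
  show c (Submodule.Quotient.mk (f x ⊗ₜ[ℤ] n)) = g x n
  rw [← h1]
  have := DFunLike.congr_fun hc (Submodule.Quotient.mk (x ⊗ₜ[ℤ] n))
  rw [show dualZ (Bal.map R f (LinearMap.id : N →ₗ[R] N)).toAddMonoidHom c
      (Submodule.Quotient.mk (x ⊗ₜ[ℤ] n)) =
      c ((Bal.map R f (LinearMap.id : N →ₗ[R] N)) (Submodule.Quotient.mk (x ⊗ₜ[ℤ] n))) from rfl]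
    at this
  rw [this, balPsi_apply]

end BalAdj

section Retract

/-- A retract of an injective module is injective. -/
lemma module_injective_of_retract {S Q Q' : Type} [Ring S] [AddCommGroup Q] [Module S Q]
    [AddCommGroup Q'] [Module S Q'] (s : Q →ₗ[S] Q') (r : Q' →ₗ[S] Q)
    (hrs : ∀ x, r (s x) = x) (hQ' : Module.Injective S Q') : Module.Injective S Q := by
  constructor
  intro X Y _ _ _ _ f hf g
  obtain ⟨h', hh'⟩ := hQ'.out f hf (s.comp g)
  refine ⟨r.comp h', fun x => ?_⟩
  show r (h' (f x)) = g x
  rw [hh' x]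
  exact hrs (g x)

/-- A surjection of modules with injective kernel splits. -/
lemma exists_section {S K Q Z : Type} [Ring S] [AddCommGroup K] [Module S K]
    [AddCommGroup Q] [Module S Q] [AddCommGroup Z] [Module S Z]
    (ι : K →ₗ[S] Q) (q : Q →ₗ[S] Z) (hq : Function.Surjective q)
    (hι : Function.Injective ι) (hcomp : ∀ k, q (ι k) = 0)
    (hker : ∀ y, q y = 0 → ∃ k, ι k = y)
    (hK : Module.Injective S K) :
    ∃ s : Z →ₗ[S] Q, ∀ z, q (s z) = z := by
  obtain ⟨r, hr⟩ := hK.out ι hι LinearMap.id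
  set p : Q →ₗ[S] Q := LinearMap.id - ι.comp r with hp
  have hpker : LinearMap.ker q ≤ LinearMap.ker p := by
    intro y hy
    obtain ⟨k, rfl⟩ := hker y (LinearMap.mem_ker.mp hy)
    show ι k - ι (r (ι k)) = 0
    rw [hr k]
    show ι k - ι k = 0
    rw [sub_self]
  set s0 : (Q ⧸ LinearMap.ker q) →ₗ[S] Q := Submodule.liftQ _ p hpker with hs0
  set e := q.quotKerEquivOfSurjective hq with he
  refine ⟨s0.comp e.symm.toLinearMap, fun z => ?_⟩
  obtain ⟨y, rfl⟩ := hq z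
  have hey : e (Submodule.Quotient.mk y) = q y := rfl
  have he' : e.symm (q y) = Submodule.Quotient.mk y := by
    rw [LinearEquiv.symm_apply_eq, hey]
  show q (s0 (e.symm (q y))) = q y
  rw [he']
  show q (p y) = q y
  have : p y = y - ι (r y) := rfl
  rw [this, map_sub, hcomp, sub_zero]

end Retract



section BalAdj2

variable (R : Type) [Ring R]
variable {M N N' : Type} [AddCommGroup M] [Module Rᵐᵒᵖ M]
  [AddCommGroup N] [Module R N] [AddCommGroup N'] [Module R N']

lemma bal_map_id_mk (g : N →ₗ[R] N') (m : M) (n : N) :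
    Bal.map R (LinearMap.id : M →ₗ[Rᵐᵒᵖ] M) g (Submodule.Quotient.mk (m ⊗ₜ[ℤ] n)) =
      Submodule.Quotient.mk (m ⊗ₜ[ℤ] g n) := by
  rw [Bal.map_mk]
  rfl

end BalAdj2

section CxConcrete

variable {A : Type} [Ring A]

lemma exactAt_iff_func (C : Cx A) (i j k : ℤ) (hij : i + 1 = j) (hjk : j + 1 = k) :
    C.ExactAt j ↔ Function.Exact (C.d i j) (C.d j k) := by
  rw [C.exactAt_iff' i j k ((ComplexShape.up ℤ).prev_eq' (by simpa using hij))
    ((ComplexShape.up ℤ).next_eq' (by simpa using hjk))]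
  exact CategoryTheory.ShortComplex.ShortExact.moduleCat_exact_iff_function_exact _

lemma iCycles_injective (C : Cx A) (n : ℤ) : Function.Injective (C.iCycles n) :=
  (ModuleCat.mono_iff_injective _).mp inferInstance

lemma iCycles_d_apply (C : Cx A) (n k : ℤ) (z : C.cycles n) :
    C.d n k (C.iCycles n z) = 0 := by
  have h := C.iCycles_d n k
  calc C.d n k (C.iCycles n z) = (C.iCycles n ≫ C.d n k) z := rfl
    _ = (0 : C.cycles n ⟶ C.X k) z := by rw [h]
    _ = 0 := rfl

lemma d_d_apply (C : Cx A) (i j k : ℤ) (x : C.X i) : C.d j k (C.d i j x) = 0 := by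
  have h := C.d_comp_d i j k
  calc C.d j k (C.d i j x) = (C.d i j ≫ C.d j k) x := rfl
    _ = (0 : C.X i ⟶ C.X k) x := by rw [h]
    _ = 0 := rfl

lemma toCycles_i_apply (C : Cx A) (i j : ℤ) (x : C.X i) :
    C.iCycles j (C.toCycles i j x) = C.d i j x := by
  have h := C.toCycles_i (i := i) (j := j)
  calc C.iCycles j (C.toCycles i j x) = (C.toCycles i j ≫ C.iCycles j) x := rfl
    _ = C.d i j x := by rw [h]

lemma mem_cycles_of_d (C : Cx A) (n : ℤ) (x : C.X n) (hx : C.d n (n + 1) x = 0) :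
    ∃ z : C.cycles n, C.iCycles n z = x := by
  let φ : ModuleCat.of A A ⟶ C.X n := ModuleCat.ofHom (LinearMap.toSpanSingleton A _ x)
  have hφ : φ ≫ C.d n (n + 1) = 0 := by
    refine ModuleCat.hom_ext (LinearMap.ext fun r => ?_)
    show C.d n (n + 1) (r • x) = 0
    rw [map_smul, hx, smul_zero]
  have hnext : (ComplexShape.up ℤ).next n = n + 1 := (ComplexShape.up ℤ).next_eq' (by simp)
  refine ⟨C.liftCycles φ (n + 1) hnext hφ (1 : A), ?_⟩
  have h1 : C.iCycles n (C.liftCycles φ (n + 1) hnext hφ (1 : A)) = φ (1 : A) := by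
    have h := C.liftCycles_i φ (n + 1) hnext hφ
    calc C.iCycles n (C.liftCycles φ (n + 1) hnext hφ (1 : A))
        = (C.liftCycles φ (n + 1) hnext hφ ≫ C.iCycles n) (1 : A) := rfl
      _ = φ (1 : A) := by rw [h]
  have h2 : φ (1 : A) = x := by
    show (1 : A) • x = x
    rw [one_smul]
  rw [h1, h2]

lemma toCycles_surjective (C : Cx A) (hC : IsAcyclic A C) (i j : ℤ) (hij : i + 1 = j) :
    Function.Surjective (C.toCycles i j) := by
  intro z
  have hz : C.d j (j + 1) (C.iCycles j z) = 0 := iCycles_d_apply C _ _ z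
  have hex := (exactAt_iff_func C i j (j + 1) hij rfl).mp (hC j)
  obtain ⟨x, hx⟩ := (hex (C.iCycles j z)).mp hz
  exact ⟨x, iCycles_injective C j (by rw [toCycles_i_apply, hx])⟩

lemma exact_iCycles_toCycles (C : Cx A) (n : ℤ) :
    Function.Exact (C.iCycles n) (C.toCycles n (n + 1)) := by
  intro x
  constructor
  · intro hx
    have hdx : C.d n (n + 1) x = 0 := by
      rw [← toCycles_i_apply, hx, map_zero]
    exact mem_cycles_of_d C n x hdx
  · rintro ⟨z, rfl⟩
    apply iCycles_injective C (n + 1)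
    rw [toCycles_i_apply, map_zero, iCycles_d_apply]

end CxConcrete

section DualCx

variable (R : Type) [Ring R]

/-- The character dual of a complex of left `R`-modules, as a complex of right
`R`-modules. -/
def dualCx (F : Cx R) : Cx Rᵐᵒᵖ where
  X n := ModuleCat.of Rᵐᵒᵖ (CharacterModule (F.X (-n)))
  d i j := ModuleCat.ofHom (cdual (F.d (-j) (-i)).hom)
  shape i j hij := by
    have h0 : F.d (-j) (-i) = 0 := F.shape _ _ (by
      intro hc
      apply hij
      simp only [ComplexShape.up_Rel] at hc ⊢
      omega)
    show ModuleCat.ofHom (cdual (F.d (-j) (-i)).hom) = 0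
    rw [h0, ModuleCat.hom_zero, cdual_zero]
    rfl
  d_comp_d' i j k _ _ := by
    show ModuleCat.ofHom (cdual (F.d (-j) (-i)).hom) ≫ ModuleCat.ofHom (cdual (F.d (-k) (-j)).hom) = 0
    have hd : (F.d (-j) (-i)).hom.comp (F.d (-k) (-j)).hom = 0 := by
      rw [← ModuleCat.hom_comp, F.d_comp_d (-k) (-j) (-i), ModuleCat.hom_zero]
    rw [← ModuleCat.ofHom_comp, cdual_comp, hd, cdual_zero]
    rfl

lemma dualCx_X_injective (F : Cx R) (hF : ∀ n, FlatModule R (F.X n)) (n : ℤ) :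
    Module.Injective Rᵐᵒᵖ ((dualCx R F).X n) :=
  flat_char_injective R (F.X (-n)) (hF (-n))

lemma dualCx_acyclic (F : Cx R) (hF : IsAcyclic R F) : IsAcyclic Rᵐᵒᵖ (dualCx R F) := by
  intro n
  rw [exactAt_iff_func (dualCx R F) (n - 1) n (n + 1) (by ring) rfl]
  have hex := (exactAt_iff_func F (-(n + 1)) (-n) (-(n - 1)) (by ring) (by ring)).mp (hF (-n))
  have hd := dualZ_exact_of_exact (F.d (-(n + 1)) (-n)).hom.toAddMonoidHom
    (F.d (-n) (-(n - 1))).hom.toAddMonoidHom hex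
  exact hd

end DualCx

section Homotopy

open CochainComplex.HomComplex

lemma homotopy_of_acyclic_hom {A : Type} [Ring A] (I : Cx A)
    (hI : IsAcyclicAb (CochainComplex.HomComplex I I)) :
    ∃ y : Cochain I I (-1), δ (-1) 0 y = Cochain.ofHom (𝟙 I) := by
  have h0 := hI 0
  rw [(CochainComplex.HomComplex I I).exactAt_iff' (-1) 0 1
    ((ComplexShape.up ℤ).prev_eq' (by simp))
    ((ComplexShape.up ℤ).next_eq' (by simp))] at h0
  rw [CategoryTheory.ShortComplex.ab_exact_iff] at h0
  obtain ⟨y, hy⟩ := h0 (Cochain.ofHom (𝟙 I)) (δ_ofHom (𝟙 I))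
  exact ⟨y, hy⟩

lemma homotopy_component {A : Type} [Ring A] {I : Cx A} {y : Cochain I I (-1)}
    (hy : δ (-1) 0 y = Cochain.ofHom (𝟙 I)) (p q q' : ℤ) (hq : p + (-1) = q)
    (hq' : p + 1 = q') (x : I.X p) :
    I.d q p (y.v p q hq x) + y.v q' p (by omega) (I.d p q' x) = x := by
  have h1 : (δ (-1) 0 y).v p p (add_zero p) = (Cochain.ofHom (𝟙 I)).v p p (add_zero p) := by
    rw [hy]
  rw [δ_v (-1) 0 (by norm_num) y p p (add_zero p) q q' (by omega) hq'] at h1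
  rw [Int.negOnePow_zero, one_smul] at h1
  simp only [Cochain.ofHom_v] at h1
  have h2 := congrArg (fun f => ModuleCat.Hom.hom f x) h1
  simpa using h2

end Homotopy

section KeyLemma

variable (R : Type) [Ring R]

/-- Identity coercion making the carrier of `dualCx` syntactically a character module. -/
def asChar {F : Cx R} {n : ℤ} (x : (dualCx R F).X n) : CharacterModule (F.X (-n)) := x

open CochainComplex.HomComplex in
/-- The character dual of every cycle module of an acyclic complex of flat modules is an
injective right module, assuming every acyclic complex of injectives is semi-injective. -/
lemma cycles_char_injective (F : Cx R)
    (hflat : ∀ n, FlatModule R (F.X n)) (hac : IsAcyclic R F)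
    (hsemi : ∀ I : Cx Rᵐᵒᵖ, (∀ n : ℤ, Module.Injective Rᵐᵒᵖ (I.X n)) → IsAcyclic Rᵐᵒᵖ I →
      SemiInjective I)
    (k p : ℤ) (hk : -(p - 1) = k) :
    Module.Injective Rᵐᵒᵖ (CharacterModule (F.cycles k)) := by
  subst hk
  have hXinj := dualCx_X_injective R F hflat
  have hacI := dualCx_acyclic R F hac
  have hhc := (hsemi (dualCx R F) hXinj hacI).2 (dualCx R F) hacI
  obtain ⟨y, hy⟩ := homotopy_of_acyclic_hom (dualCx R F) hhc
  have hpq : p + (-1) = p - 1 := by omega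
  -- the surjection onto cycles
  have htsurj : Function.Surjective (F.toCycles (-p) (-(p - 1))) := by
    intro z
    have hz : F.d (-(p - 1)) (-(p - 1) + 1) (F.iCycles (-(p - 1)) z) = 0 :=
      iCycles_d_apply F _ _ z
    have hex := (exactAt_iff_func F (-p) (-(p - 1)) (-(p - 1) + 1) (by omega) rfl).mp
      (hac (-(p - 1)))
    obtain ⟨x, hx⟩ := (hex (F.iCycles (-(p - 1)) z)).mp hz
    exact ⟨x, iCycles_injective F _ (by rw [toCycles_i_apply, hx])⟩
  -- retract data
  set W := CharacterModule (F.cycles (-(p - 1))) with hW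
  set s1 : W →ₗ[Rᵐᵒᵖ] CharacterModule (F.X (-p)) := cdual (F.toCycles (-p) (-(p - 1))).hom with hs1
  -- s1 φ is killed by the differential (dualCx R F).d p (p+1)
  have hs1ker : ∀ φ : W,
      ((dualCx R F).d p (p + 1)) (s1 φ) = (0 : CharacterModule (F.X (-(p + 1)))) := by
    intro φ
    show (cdual (F.d (-(p + 1)) (-p)).hom) (s1 φ) = 0
    refine DFunLike.ext _ _ fun x => ?_
    show φ (F.toCycles (-p) (-(p - 1)) (F.d (-(p + 1)) (-p) x)) = 0
    have h0 : F.toCycles (-p) (-(p - 1)) (F.d (-(p + 1)) (-p) x) = 0 := by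
      apply iCycles_injective F (-(p - 1))
      rw [toCycles_i_apply, map_zero, d_d_apply F (-(p + 1)) (-p) (-(p - 1)) x]
    rw [h0]
    exact map_zero φ
  -- the section and retraction
  refine module_injective_of_retract
    (s := LinearMap.comp
      (show CharacterModule (F.X (-p)) →ₗ[Rᵐᵒᵖ] CharacterModule (F.X (-(p - 1))) from
        (y.v p (p - 1) hpq).hom) s1)
    (r := cdual (F.iCycles (-(p - 1))).hom)
    ?_ (hXinj (p - 1))
  intro φ
  have hhom := homotopy_component hy p (p - 1) (p + 1) hpq rfl (s1 φ)
  rw [hs1ker φ] at hhom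
  erw [map_zero] at hhom
  rw [add_zero] at hhom
  refine DFunLike.ext _ _ fun z => ?_
  obtain ⟨x, rfl⟩ := htsurj z
  have h5 := DFunLike.congr_fun (congrArg (asChar R) hhom) x
  have h6 : F.iCycles (-(p - 1)) (F.toCycles (-p) (-(p - 1)) x) = F.d (-p) (-(p - 1)) x :=
    toCycles_i_apply F _ _ x
  show (asChar R (y.v p (p - 1) hpq (s1 φ)))
      (F.iCycles (-(p - 1)) (F.toCycles (-p) (-(p - 1)) x)) = φ (F.toCycles (-p) (-(p - 1)) x)
  rw [h6]
  exact h5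

end KeyLemma


/-- **Remark 1.6.** If every acyclic complex of injective right `R`-modules is
semi-injective, then every acyclic complex of flat left `R`-modules is pure acyclic. -/
theorem I3_implies_F2 (R : Type) [Ring R]
    (h : ∀ I : Cx Rᵐᵒᵖ, (∀ n : ℤ, Module.Injective Rᵐᵒᵖ (I.X n)) → IsAcyclic Rᵐᵒᵖ I →
      SemiInjective I) :
    ∀ F : Cx R, (∀ n : ℤ, FlatModule R (F.X n)) → IsAcyclic R F → PureAcyclic R F := by
  intro F hflat hac
  refine ⟨hac, fun n M => ?_⟩
  -- basic facts about the short exact sequence of cycles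
  have hiinj : Function.Injective (F.iCycles n) := iCycles_injective F n
  have htsurj : Function.Surjective (F.toCycles n (n + 1)) :=
    toCycles_surjective F hac n (n + 1) rfl
  have hit : Function.Exact (F.iCycles n) (F.toCycles n (n + 1)) :=
    exact_iCycles_toCycles F n
  -- dual facts
  have hdit : Function.Exact (dualZ (F.toCycles n (n + 1)).hom.toAddMonoidHom)
      (dualZ (F.iCycles n).hom.toAddMonoidHom) :=
    dualZ_exact_of_exact _ _ hit
  have hdtinj : Function.Injective (dualZ (F.toCycles n (n + 1)).hom.toAddMonoidHom) :=
    dualZ_injective_of_surjective _ htsurj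
  have hdisurj : Function.Surjective (dualZ (F.iCycles n).hom.toAddMonoidHom) :=
    dualZ_surjective_of_injective _ hiinj
  -- the character module of the next cycles is injective
  have hK : Module.Injective Rᵐᵒᵖ (CharacterModule (F.cycles (n + 1))) :=
    cycles_char_injective R F hflat hac h (n + 1) (-n) (by ring)
  -- split the dual surjection `cdual (F.iCycles n).hom`
  obtain ⟨s, hs⟩ := exists_section (cdual (F.toCycles n (n + 1)).hom) (cdual (F.iCycles n).hom)
    hdisurj hdtinj
    (fun k => (hdit (cdual (F.toCycles n (n + 1)).hom k)).mpr ⟨k, rfl⟩)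
    (fun y hy => (hdit y).mp hy) hK
  -- (1) injectivity
  have hTi : Function.Surjective
      (CharacterModule.dual (Bal.map R (LinearMap.id : M →ₗ[Rᵐᵒᵖ] M) (F.iCycles n).hom)) := by
    intro c
    refine ⟨balPsi R (s.comp (balPhi R c)), ?_⟩
    refine bal_character_ext R fun m z => ?_
    show balPsi R (s.comp (balPhi R c))
      (Bal.map R LinearMap.id (F.iCycles n).hom (Submodule.Quotient.mk (m ⊗ₜ[ℤ] z))) =
        c (Submodule.Quotient.mk (m ⊗ₜ[ℤ] z))
    rw [bal_map_id_mk]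
    have h2 := DFunLike.congr_fun (hs (balPhi R c m)) z
    exact h2
  have hinj : Function.Injective (Bal.map R (LinearMap.id : M →ₗ[Rᵐᵒᵖ] M) (F.iCycles n).hom) :=
    CharacterModule.dual_surjective_iff_injective.mp hTi
  -- (2) exactness
  have hdual2 : Function.Exact
      (dualZ (Bal.map R (LinearMap.id : M →ₗ[Rᵐᵒᵖ] M) (F.toCycles n (n + 1)).hom).toAddMonoidHom)
      (dualZ (Bal.map R (LinearMap.id : M →ₗ[Rᵐᵒᵖ] M) (F.iCycles n).hom).toAddMonoidHom) := by
    intro c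
    constructor
    · intro hc
      have hmem : ∀ m : M, balPhi R c m ∈ LinearMap.range (cdual (F.toCycles n (n + 1)).hom) := by
        intro m
        have h0 : cdual (F.iCycles n).hom (balPhi R c m) = 0 := by
          refine DFunLike.ext _ _ fun z => ?_
          have h1 := DFunLike.congr_fun hc (Submodule.Quotient.mk (m ⊗ₜ[ℤ] z))
          show c (Submodule.Quotient.mk (m ⊗ₜ[ℤ] (F.iCycles n z))) = 0
          rw [← bal_map_id_mk]
          exact h1
        obtain ⟨ψ, hψ⟩ := (hdit (balPhi R c m)).mp h0
        exact ⟨ψ, hψ⟩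
      set e := LinearEquiv.ofInjective (cdual (R := R) (F.toCycles n (n + 1)).hom)
        (show Function.Injective (cdual (R := R) (F.toCycles n (n + 1)).hom) from hdtinj) with he
      set ψ : M →ₗ[Rᵐᵒᵖ] CharacterModule (F.cycles (n + 1)) :=
        e.symm.toLinearMap.comp
          ((balPhi R c).codRestrict (LinearMap.range (cdual (F.toCycles n (n + 1)).hom)) hmem)
        with hψdef
      refine ⟨balPsi R ψ, ?_⟩
      refine bal_character_ext R fun m x => ?_
      show balPsi R ψ
        (Bal.map R LinearMap.id (F.toCycles n (n + 1)).hom (Submodule.Quotient.mk (m ⊗ₜ[ℤ] x))) =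
          c (Submodule.Quotient.mk (m ⊗ₜ[ℤ] x))
      rw [bal_map_id_mk]
      have h3 : (cdual (R := R) (F.toCycles n (n + 1)).hom) (ψ m) = balPhi R c m := by
        have h4 : e (ψ m) = ⟨balPhi R c m, hmem m⟩ := e.apply_symm_apply _
        have h5 := congrArg Subtype.val h4
        rwa [LinearEquiv.ofInjective_apply] at h5
      have h6 := DFunLike.congr_fun h3 x
      exact h6
    · rintro ⟨c₁, rfl⟩
      refine bal_character_ext R fun m z => ?_
      show c₁ (Bal.map R LinearMap.id (F.toCycles n (n + 1)).hom
          (Bal.map R LinearMap.id (F.iCycles n).hom (Submodule.Quotient.mk (m ⊗ₜ[ℤ] z)))) =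
        (0 : CharacterModule (Bal R M (F.cycles n))) (Submodule.Quotient.mk (m ⊗ₜ[ℤ] z))
      rw [bal_map_id_mk, bal_map_id_mk]
      have h6 : F.toCycles n (n + 1) (F.iCycles n z) = 0 := hit.apply_apply_eq_zero z
      rw [h6, TensorProduct.tmul_zero, Submodule.Quotient.mk_zero, map_zero]
      rfl
  have hexact : Function.Exact
      (Bal.map R (LinearMap.id : M →ₗ[Rᵐᵒᵖ] M) (F.iCycles n).hom)
      (Bal.map R (LinearMap.id : M →ₗ[Rᵐᵒᵖ] M) (F.toCycles n (n + 1)).hom) :=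
    exact_of_dualZ_exact _ _ hdual2
  -- (3) surjectivity
  have hsurj : Function.Surjective
      (Bal.map R (LinearMap.id : M →ₗ[Rᵐᵒᵖ] M) (F.toCycles n (n + 1)).hom) :=
    bal_map_id_surjective R _ htsurj
  exact ⟨hinj, hexact, hsurj⟩

end
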